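/- Let n and k be integers with n ≥ 2 and k ≥ 2. There exists an integer c such that n + k − n·k·c = 1 or n + k − n·k·c = −1 if and only if (n,k) = (2,3) or (n,k) = (3,2). -/
import Mathlib


/-- Arithmetic content of the corollary: the unit tangent bundle of the
`(n,k)` orbifold embeds into `S³` iff `{n,k} = {2,3}`. -/
theorem embeds_in_S3_iff_modular (n k : ℤ) (hn : 2 ≤ n) (hk : 2 ≤ k) :
    (∃ c : ℤ, n + k - n * k * c = 1 ∨ n + k - n * k * c = -1) ↔
      ((n = 2 ∧ k = 3) ∨ (n = 3 ∧ k = 2)) := by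
  have hpos : (0:ℤ) < n * k := mul_pos (by omega) (by omega)
  have hnk : n + k ≤ n * k := by nlinarith
  constructor
  · rintro ⟨c, hc⟩
    have hc1 : c = 1 := by
      rcases le_or_gt c 0 with h0 | h0
      · have hle : n * k * c ≤ 0 := mul_nonpos_of_nonneg_of_nonpos hpos.le h0
        rcases hc with h | h <;> omega
      · rcases le_or_gt 2 c with h2 | h2
        · have hle : n * k * 2 ≤ n * k * c := by
            exact mul_le_mul_of_nonneg_left h2 hpos.le
          rcases hc with h | h <;> nlinarith
        · omega
    subst hc1
    have heq : n * k = n + k + 1 := by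
      rcases hc with h | h
      · have hge : n * k ≤ n * k * 1 := by nlinarith
        nlinarith
      · nlinarith
    have h2 : 0 ≤ (n - 2) * (k - 2) := mul_nonneg (by omega) (by omega)
    have hs : n + k ≤ 5 := by nlinarith
    have hn3 : n ≤ 3 := by omega
    have hk3 : k ≤ 3 := by omega
    interval_cases n <;> interval_cases k <;> omega
  · rintro (⟨rfl, rfl⟩ | ⟨rfl, rfl⟩) <;> exact ⟨1, Or.inr (by norm_num)⟩
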